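/- Let A ∈ ℂ^{m×m} be Hermitian and B ∈ ℂ^{m×n}. Then the maximum of r(A - B·X·B*) over all Hermitian X ∈ ℂ^{n×n} equals r[A, B], and the minimum equals 2·r[A, B] - r([[A, B],[B*, 0]]). -/

import Mathlib

set_option linter.unusedSectionVars false
set_option maxHeartbeats 4000000
open Matrix ComplexOrder

/-- `X` satisfies the four Penrose equations for `A`, i.e. `X` is the
Moore–Penrose inverse of `A`. -/
def IsMP {m n : Type*} [Fintype m] [Fintype n]
    (A : Matrix m n ℂ) (X : Matrix n m ℂ) : Prop :=
  A * X * A = A ∧ X * A * X = X ∧ (A * X)ᴴ = A * X ∧ (X * A)ᴴ = X * A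

/-- the number of positive eigenvalues (with multiplicity) of a Hermitian matrix -/
noncomputable def iPos {n : Type*} [Fintype n] [DecidableEq n] {A : Matrix n n ℂ}
    (hA : A.IsHermitian) : ℕ := Nat.card {i // 0 < hA.eigenvalues i}

/-- the number of negative eigenvalues (with multiplicity) of a Hermitian matrix -/
noncomputable def iNeg {n : Type*} [Fintype n] [DecidableEq n] {A : Matrix n n ℂ}
    (hA : A.IsHermitian) : ℕ := Nat.card {i // hA.eigenvalues i < 0}

namespace Stmt10Aux

variable {m₁ m₂ n₁ n₂ p q r s : Type*}
  [Fintype m₁] [Fintype m₂] [Fintype n₁] [Fintype n₂]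
  [Fintype p] [Fintype q] [Fintype r] [Fintype s]
  [DecidableEq m₁] [DecidableEq m₂] [DecidableEq n₁] [DecidableEq n₂]
  [DecidableEq p] [DecidableEq q] [DecidableEq r] [DecidableEq s]

/-- assoc-lifted rewriting helper -/
lemma lift2 {x : Matrix p q ℂ} {y : Matrix q r ℂ} {z : Matrix p r ℂ}
    (h : x * y = z) (W : Matrix r s ℂ) : x * (y * W) = z * W := by
  rw [← Matrix.mul_assoc, h]

lemma lift3 {x : Matrix p q ℂ} {y : Matrix q r ℂ} {w : Matrix r m₁ ℂ} {z : Matrix p m₁ ℂ}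
    (h : x * y * w = z) (W : Matrix m₁ s ℂ) : x * (y * (w * W)) = z * W := by
  rw [← Matrix.mul_assoc, ← Matrix.mul_assoc, h]

lemma rank_add_finrank_ker (M : Matrix p q ℂ) :
    M.rank + Module.finrank ℂ (LinearMap.ker M.mulVecLin) = Fintype.card q := by
  rw [Matrix.rank, LinearMap.finrank_range_add_finrank_ker]
  simp

lemma range_fromColumns (M : Matrix p n₁ ℂ) (N : Matrix p n₂ ℂ) :
    LinearMap.range (fromCols M N).mulVecLin
      = LinearMap.range M.mulVecLin ⊔ LinearMap.range N.mulVecLin := by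
  apply le_antisymm
  · rintro x ⟨v, rfl⟩
    have hv : v = Sum.elim (v ∘ Sum.inl) (v ∘ Sum.inr) := by ext (i | i) <;> rfl
    rw [mulVecLin_apply, hv, fromCols_mulVec_sumElim]
    exact Submodule.add_mem_sup ⟨_, rfl⟩ ⟨_, rfl⟩
  · rw [sup_le_iff]
    constructor
    · rintro x ⟨v, rfl⟩
      refine ⟨Sum.elim v 0, ?_⟩
      simp [mulVecLin_apply]
    · rintro x ⟨v, rfl⟩
      refine ⟨Sum.elim 0 v, ?_⟩
      simp [mulVecLin_apply]

lemma ker_fromRows (M : Matrix m₁ q ℂ) (N : Matrix m₂ q ℂ) :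
    LinearMap.ker (fromRows M N).mulVecLin
      = LinearMap.ker M.mulVecLin ⊓ LinearMap.ker N.mulVecLin := by
  ext v
  simp only [LinearMap.mem_ker, Submodule.mem_inf, mulVecLin_apply, fromRows_mulVec]
  constructor
  · intro h
    constructor
    · ext i; exact congrFun h (Sum.inl i)
    · ext i; exact congrFun h (Sum.inr i)
  · rintro ⟨h1, h2⟩
    rw [h1, h2]
    ext (i | i) <;> rfl

/-- key rank additivity lemma: if the column spaces and row spaces of `X` and `Y`
are orthogonal, ranks add. -/
lemma rank_add_of_orth (X Y : Matrix p q ℂ) (h1 : Xᴴ * Y = 0) (h2 : X * Yᴴ = 0) :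
    (X + Y).rank = X.rank + Y.rank := by
  classical
  have hker : LinearMap.ker (X + Y).mulVecLin
      = LinearMap.ker X.mulVecLin ⊓ LinearMap.ker Y.mulVecLin := by
    ext v
    simp only [LinearMap.mem_ker, Submodule.mem_inf, mulVecLin_apply]
    constructor
    · intro h
      have hX : (Xᴴ * X) *ᵥ v = 0 := by
        have e : Xᴴ * X = Xᴴ * (X + Y) := by rw [Matrix.mul_add, h1, add_zero]
        rw [e, ← mulVec_mulVec, h, mulVec_zero]
      have hXv : X *ᵥ v = 0 := by
        have hv : v ∈ LinearMap.ker (Xᴴ * X).mulVecLin := hX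
        rw [Matrix.ker_mulVecLin_conjTranspose_mul_self] at hv
        exact hv
      refine ⟨hXv, ?_⟩
      have := h
      rw [add_mulVec, hXv, zero_add] at this
      exact this
    · rintro ⟨ha, hb⟩
      rw [add_mulVec, ha, hb, add_zero]
  have h3 : (X + Y).rank = (fromRows X Y).rank := by
    have e1 := rank_add_finrank_ker (X + Y)
    have e2 := rank_add_finrank_ker (fromRows X Y)
    rw [ker_fromRows, ← hker] at e2
    omega
  have h4 : (fromRows X Y).rank = (fromCols Xᴴ Yᴴ).rank := by
    rw [← Matrix.rank_conjTranspose (fromRows X Y),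
      conjTranspose_fromRows_eq_fromCols_conjTranspose]
  have h6 : LinearMap.range Xᴴ.mulVecLin ⊓ LinearMap.range Yᴴ.mulVecLin = ⊥ := by
    rw [Submodule.eq_bot_iff]
    rintro x ⟨⟨u, hu⟩, ⟨w, hw⟩⟩
    have hYX : Y * Xᴴ = 0 := by
      have := congrArg conjTranspose h2
      rwa [conjTranspose_mul, conjTranspose_conjTranspose, conjTranspose_zero] at this
    have hYx : Y *ᵥ x = 0 := by
      rw [← hu, mulVecLin_apply, mulVec_mulVec, hYX, zero_mulVec]
    simp only [mulVecLin_apply] at hu hw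
    have hw' : w ∈ LinearMap.ker (Y * Yᴴ).mulVecLin := by
      simp only [LinearMap.mem_ker, mulVecLin_apply, ← mulVec_mulVec]
      rw [hw]
      exact hYx
    have hker' : w ∈ LinearMap.ker Yᴴ.mulVecLin := by
      have hYY : (Y * Yᴴ) = (Yᴴᴴ * Yᴴ) := by rw [conjTranspose_conjTranspose]
      rw [hYY, Matrix.ker_mulVecLin_conjTranspose_mul_self] at hw'
      exact hw'
    simp only [LinearMap.mem_ker, mulVecLin_apply] at hker'
    rw [← hw, hker']
  have h5 : (fromCols Xᴴ Yᴴ).rank = Xᴴ.rank + Yᴴ.rank := by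
    rw [Matrix.rank, range_fromColumns, Matrix.rank, Matrix.rank]
    have := Submodule.finrank_sup_add_finrank_inf_eq
      (LinearMap.range Xᴴ.mulVecLin) (LinearMap.range Yᴴ.mulVecLin)
    rw [h6] at this
    simpa using this
  rw [h3, h4, h5, Matrix.rank_conjTranspose, Matrix.rank_conjTranspose]

end Stmt10Aux

open Matrix ComplexOrder

namespace Stmt10Aux2

variable {m₁ m₂ n₁ n₂ p q r s : Type*}
  [Fintype m₁] [Fintype m₂] [Fintype n₁] [Fintype n₂]
  [Fintype p] [Fintype q] [Fintype r] [Fintype s]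
  [DecidableEq m₁] [DecidableEq m₂] [DecidableEq n₁] [DecidableEq n₂]
  [DecidableEq p] [DecidableEq q] [DecidableEq r] [DecidableEq s]

lemma rank_fromRows_zero_bot (M : Matrix m₁ q ℂ) :
    (fromRows M (0 : Matrix m₂ q ℂ)).rank = M.rank := by
  apply le_antisymm
  · have h : fromRows M (0 : Matrix m₂ q ℂ) = fromRows (1 : Matrix m₁ m₁ ℂ) 0 * M := by
      rw [fromRows_mul, Matrix.one_mul, Matrix.zero_mul]
    rw [h]
    exact rank_mul_le_right _ _
  · have h : M = fromCols (1 : Matrix m₁ m₁ ℂ) (0 : Matrix m₁ m₂ ℂ) *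
        fromRows M (0 : Matrix m₂ q ℂ) := by
      rw [fromCols_mul_fromRows, Matrix.one_mul, Matrix.zero_mul, add_zero]
    conv_lhs => rw [h]
    exact rank_mul_le_right _ _

lemma rank_fromRows_zero_top (M : Matrix m₂ q ℂ) :
    (fromRows (0 : Matrix m₁ q ℂ) M).rank = M.rank := by
  apply le_antisymm
  · have h : fromRows (0 : Matrix m₁ q ℂ) M = fromRows (0 : Matrix m₁ m₂ ℂ) 1 * M := by
      rw [fromRows_mul, Matrix.one_mul, Matrix.zero_mul]
    rw [h]
    exact rank_mul_le_right _ _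
  · have h : M = fromCols (0 : Matrix m₂ m₁ ℂ) (1 : Matrix m₂ m₂ ℂ) *
        fromRows (0 : Matrix m₁ q ℂ) M := by
      rw [fromCols_mul_fromRows, Matrix.one_mul, Matrix.zero_mul, zero_add]
    conv_lhs => rw [h]
    exact rank_mul_le_right _ _

lemma rank_fromColumns_zero_right (M : Matrix p n₁ ℂ) :
    (fromCols M (0 : Matrix p n₂ ℂ)).rank = M.rank := by
  apply le_antisymm
  · have h : fromCols M (0 : Matrix p n₂ ℂ) = M * fromCols (1 : Matrix n₁ n₁ ℂ) 0 := by
      rw [mul_fromCols, Matrix.mul_one, Matrix.mul_zero]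
    rw [h]
    exact rank_mul_le_left _ _
  · have h : M = fromCols M (0 : Matrix p n₂ ℂ) * fromRows (1 : Matrix n₁ n₁ ℂ) (0 : Matrix n₂ n₁ ℂ) := by
      rw [fromCols_mul_fromRows, Matrix.mul_one, Matrix.zero_mul, add_zero]
    conv_lhs => rw [h]
    exact rank_mul_le_left _ _

lemma rank_fromColumns_zero_left (M : Matrix p n₂ ℂ) :
    (fromCols (0 : Matrix p n₁ ℂ) M).rank = M.rank := by
  apply le_antisymm
  · have h : fromCols (0 : Matrix p n₁ ℂ) M = M * fromCols (0 : Matrix n₂ n₁ ℂ) 1 := by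
      rw [mul_fromCols, Matrix.mul_one, Matrix.mul_zero]
    rw [h]
    exact rank_mul_le_left _ _
  · have h : M = fromCols (0 : Matrix p n₁ ℂ) M * fromRows (0 : Matrix n₁ n₂ ℂ) (1 : Matrix n₂ n₂ ℂ) := by
      rw [fromCols_mul_fromRows, Matrix.mul_one, Matrix.zero_mul, zero_add]
    conv_lhs => rw [h]
    exact rank_mul_le_left _ _

lemma rank_fromBlocks_topleft (M : Matrix m₁ n₁ ℂ) :
    (fromBlocks M 0 0 (0 : Matrix m₂ n₂ ℂ)).rank = M.rank := by
  rw [← fromRows_fromCols_eq_fromBlocks, fromCols_zero,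
    rank_fromRows_zero_bot, rank_fromColumns_zero_right]

lemma rank_fromBlocks_topright (M : Matrix m₁ n₂ ℂ) :
    (fromBlocks 0 M (0 : Matrix m₂ n₁ ℂ) 0).rank = M.rank := by
  rw [← fromRows_fromCols_eq_fromBlocks, fromCols_zero,
    rank_fromRows_zero_bot, rank_fromColumns_zero_left]

lemma rank_fromBlocks_botleft (M : Matrix m₂ n₁ ℂ) :
    (fromBlocks 0 (0 : Matrix m₁ n₂ ℂ) M 0).rank = M.rank := by
  rw [← fromRows_fromCols_eq_fromBlocks, fromCols_zero,
    rank_fromRows_zero_top, rank_fromColumns_zero_right]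

/-- rank-nullity for the restriction of a linear map to a submodule -/
lemma finrank_map_add_finrank_inf {V W : Type*} [AddCommGroup V] [Module ℂ V]
    [AddCommGroup W] [Module ℂ W] [FiniteDimensional ℂ V]
    (f : V →ₗ[ℂ] W) (P : Submodule ℂ V) :
    Module.finrank ℂ (P.map f) + Module.finrank ℂ ↥(LinearMap.ker f ⊓ P)
      = Module.finrank ℂ P := by
  have h1 := LinearMap.finrank_range_add_finrank_ker (f.domRestrict P)
  have h2 : LinearMap.range (f.domRestrict P) = P.map f := by
    ext x
    simp only [LinearMap.mem_range, Submodule.mem_map, LinearMap.domRestrict_apply]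
    constructor
    · rintro ⟨⟨y, hy⟩, h⟩; exact ⟨y, hy, h⟩
    · rintro ⟨y, hy, h⟩; exact ⟨⟨y, hy⟩, h⟩
  have h3 : Module.finrank ℂ (LinearMap.ker (f.domRestrict P))
      = Module.finrank ℂ ↥(LinearMap.ker f ⊓ P) := by
    have e : LinearMap.ker (f.domRestrict P) = Submodule.comap P.subtype (LinearMap.ker f ⊓ P) := by
      ext ⟨x, hx⟩
      simp [LinearMap.mem_ker, LinearMap.domRestrict_apply, hx]
    rw [e]
    exact LinearEquiv.finrank_eq (Submodule.comapSubtypeEquivOfLe inf_le_right)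
  rw [h2, h3] at h1
  exact h1

/-- the Frobenius rank inequality -/
lemma frobenius_rank (X : Matrix p q ℂ) (Y : Matrix q r ℂ) (Z : Matrix r s ℂ) :
    (X * Y).rank + (Y * Z).rank ≤ Y.rank + (X * Y * Z).rank := by
  classical
  set f := X.mulVecLin with hf
  set RY := LinearMap.range Y.mulVecLin with hRY
  set RYZ := LinearMap.range (Y * Z).mulVecLin with hRYZ
  have hle : RYZ ≤ RY := by
    rw [hRY, hRYZ, Matrix.mulVecLin_mul]
    exact LinearMap.range_comp_le_range _ _
  have e1 : (X * Y).rank = Module.finrank ℂ (RY.map f) := by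
    rw [Matrix.rank, Matrix.mulVecLin_mul, LinearMap.range_comp]
  have e2 : (X * Y * Z).rank = Module.finrank ℂ (RYZ.map f) := by
    rw [Matrix.mul_assoc, Matrix.rank, Matrix.mulVecLin_mul, LinearMap.range_comp]
  have e3 : Y.rank = Module.finrank ℂ RY := rfl
  have e4 : (Y * Z).rank = Module.finrank ℂ RYZ := rfl
  have r1 := finrank_map_add_finrank_inf f RY
  have r2 := finrank_map_add_finrank_inf f RYZ
  have hmono : Module.finrank ℂ ↥(LinearMap.ker f ⊓ RYZ)
      ≤ Module.finrank ℂ ↥(LinearMap.ker f ⊓ RY) :=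
    Submodule.finrank_mono (inf_le_inf_left _ hle)
  omega

/-- existence of a Moore-Penrose-like inverse for Hermitian complex matrices -/
lemma exists_pinv {H : Matrix p p ℂ} (hH : H.IsHermitian) :
    ∃ G : Matrix p p ℂ, G.IsHermitian ∧ H * G * H = H ∧ G * H * G = G ∧ H * G = G * H := by
  classical
  set U : Matrix p p ℂ := ↑hH.eigenvectorUnitary with hU
  set d : p → ℂ := RCLike.ofReal ∘ hH.eigenvalues with hd
  set g : p → ℂ := RCLike.ofReal ∘ (fun i => (hH.eigenvalues i)⁻¹) with hg
  have hU2 : star U * U = 1 := Matrix.mem_unitaryGroup_iff'.mp (hH.eigenvectorUnitary).2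
  have hspec : H = U * diagonal d * star U := hH.spectral_theorem
  have key : ∀ x y : p → ℂ, (U * diagonal x * star U) * (U * diagonal y * star U)
      = U * diagonal (x * y) * star U := by
    intro x y
    calc (U * diagonal x * star U) * (U * diagonal y * star U)
        = U * diagonal x * (star U * U) * diagonal y * star U := by
          simp only [Matrix.mul_assoc]
      _ = U * diagonal (x * y) * star U := by
          rw [hU2, Matrix.mul_one]
          simp only [Matrix.mul_assoc, Matrix.diagonal_mul_diagonal]
          rfl
  have hdgd : d * g * d = d := by
    funext i
    simp only [Pi.mul_apply, hd, hg, Function.comp_apply, ← RCLike.ofReal_mul]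
    congr 1
    rcases eq_or_ne (hH.eigenvalues i) 0 with h | h
    · simp [h]
    · rw [mul_inv_cancel₀ h, one_mul]
  have hgdg : g * d * g = g := by
    funext i
    simp only [Pi.mul_apply, hd, hg, Function.comp_apply, ← RCLike.ofReal_mul]
    congr 1
    rcases eq_or_ne (hH.eigenvalues i) 0 with h | h
    · simp [h]
    · rw [inv_mul_cancel₀ h, one_mul]
  refine ⟨U * diagonal g * star U, ?_, ?_, ?_, ?_⟩
  · show (U * diagonal g * star U)ᴴ = U * diagonal g * star U
    rw [Matrix.star_eq_conjTranspose]
    simp only [conjTranspose_mul, conjTranspose_conjTranspose, diagonal_conjTranspose]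
    have hgstar : star g = g := by
      funext i
      simp [hg, RCLike.star_def, RCLike.conj_ofReal]
    rw [hgstar, Matrix.mul_assoc]
  · rw [hspec, key, key, hdgd]
  · rw [hspec, key, key, hgdg]
  · rw [hspec, key, key, mul_comm d g]

end Stmt10Aux2

open Matrix ComplexOrder

namespace Stmt10Aux3

variable {p q r s : Type*} [Fintype p] [Fintype q] [Fintype r] [Fintype s]
  [DecidableEq p] [DecidableEq q] [DecidableEq r] [DecidableEq s]

lemma lift2 {x : Matrix p q ℂ} {y : Matrix q r ℂ} {z : Matrix p r ℂ}
    (h : x * y = z) (W : Matrix r s ℂ) : x * (y * W) = z * W := by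
  rw [← Matrix.mul_assoc, h]

lemma lift3 {m₁ : Type*} [Fintype m₁] {x : Matrix p q ℂ} {y : Matrix q r ℂ}
    {w : Matrix r m₁ ℂ} {z : Matrix p m₁ ℂ}
    (h : x * y * w = z) (W : Matrix m₁ s ℂ) : x * (y * (w * W)) = z * W := by
  rw [← Matrix.mul_assoc, ← Matrix.mul_assoc, h]

lemma rank_neg (M : Matrix p p ℂ) : (-M).rank = M.rank := by
  have h1 : ((-1 : Matrix p p ℂ) * (-1 : Matrix p p ℂ)) = 1 := by
    rw [Matrix.neg_mul, Matrix.mul_neg, neg_neg, Matrix.mul_one]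
  have hu : IsUnit (-1 : Matrix p p ℂ).det := Matrix.isUnit_det_of_right_inverse h1
  have h2 : (-1 : Matrix p p ℂ) * M = -M := by
    rw [Matrix.neg_mul, Matrix.one_mul]
  rw [← h2, Matrix.rank_mul_eq_right_of_isUnit_det _ _ hu]

/-- cancellation: if `Gs` is a pseudoinverse of `BᴴB` then `B * Gs * (BᴴB) = B` -/
lemma mul_pinv_cancel (B : Matrix p q ℂ) {Gs : Matrix q q ℂ}
    (hGsH : Gsᴴ = Gs) (h1 : (Bᴴ * B) * Gs * (Bᴴ * B) = Bᴴ * B) :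
    B * (Gs * (Bᴴ * B)) = B := by
  set S := Bᴴ * B with hS
  have hSH : Sᴴ = S := by
    rw [hS, conjTranspose_mul, conjTranspose_conjTranspose]
  have h1' : S * (Gs * S) = S := by rw [← Matrix.mul_assoc]; exact h1
  have hz : (B * (Gs * S) - B)ᴴ * (B * (Gs * S) - B) = 0 := by
    have e : (B * (Gs * S) - B)ᴴ = S * Gs * Bᴴ - Bᴴ := by
      simp only [conjTranspose_sub, conjTranspose_mul, hGsH, hSH, Matrix.mul_assoc, hS,
        conjTranspose_conjTranspose]
    rw [e]
    simp only [Matrix.sub_mul, Matrix.mul_sub, Matrix.mul_assoc, lift2 (hS.symm),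
      lift3 h1, h1', hS.symm]
    abel
  have hzero := Matrix.conjTranspose_mul_self_eq_zero.mp hz
  have := sub_eq_zero.mp hzero
  exact this

end Stmt10Aux3

theorem stmt10 (m n : ℕ) (A : Matrix (Fin m) (Fin m) ℂ) (hA : A.IsHermitian)
    (B : Matrix (Fin m) (Fin n) ℂ) :
    IsGreatest {k | ∃ X : Matrix (Fin n) (Fin n) ℂ, X.IsHermitian ∧
        k = (A - B * X * Bᴴ).rank}
      ((fromCols A B).rank) ∧
    IsLeast {k | ∃ X : Matrix (Fin n) (Fin n) ℂ, X.IsHermitian ∧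
        k = (A - B * X * Bᴴ).rank}
      (2 * (fromCols A B).rank
        - (fromBlocks A B Bᴴ (0 : Matrix (Fin n) (Fin n) ℂ)).rank) := by
  classical
  have hAe : Aᴴ = A := hA.eq
  -- pseudoinverse of BᴴB and the projector P onto the column space of B
  obtain ⟨Gs, hGsHerm, hGs1, hGs2, hGs3⟩ :=
    Stmt10Aux2.exists_pinv (Matrix.isHermitian_conjTranspose_mul_self B)
  have hGsH : Gsᴴ = Gs := hGsHerm.eq
  set Bp : Matrix (Fin n) (Fin m) ℂ := Gs * Bᴴ with hBpdef
  set P : Matrix (Fin m) (Fin m) ℂ := B * Bp with hPdef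
  have hBBp : B * Bp = P := hPdef.symm
  have key : B * (Gs * (Bᴴ * B)) = B := Stmt10Aux3.mul_pinv_cancel B hGsH hGs1
  have hPB : P * B = B := by
    rw [hPdef, hBpdef]
    simp only [Matrix.mul_assoc]
    exact key
  have hPP : P * P = P := by
    calc P * P = (B * Bp * B) * Bp := by rw [hPdef]; simp only [Matrix.mul_assoc]
      _ = (P * B) * Bp := by rw [hBBp]
      _ = B * Bp := by rw [hPB]
      _ = P := hBBp
  have hPH : Pᴴ = P := by
    rw [hPdef, hBpdef]
    simp only [conjTranspose_mul, conjTranspose_conjTranspose, hGsH, Matrix.mul_assoc]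
  set E : Matrix (Fin m) (Fin m) ℂ := 1 - P with hEdef
  have hEP : E * P = 0 := by
    rw [hEdef, Matrix.sub_mul, Matrix.one_mul, hPP, sub_self]
  have hPE : P * E = 0 := by
    rw [hEdef, Matrix.mul_sub, Matrix.mul_one, hPP, sub_self]
  have hEE : E * E = E := by
    nth_rewrite 1 [hEdef]
    rw [Matrix.sub_mul, Matrix.one_mul, hPE, sub_zero]
  have hEH : Eᴴ = E := by
    rw [hEdef, conjTranspose_sub, conjTranspose_one, hPH]
  have hEB : E * B = 0 := by
    rw [hEdef, Matrix.sub_mul, Matrix.one_mul, hPB, sub_self]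
  have hBpBH : Bpᴴ * Bᴴ = P := by
    rw [← conjTranspose_mul, ← hPdef, hPH]
  -- D and its pseudoinverse G
  set D : Matrix (Fin m) (Fin m) ℂ := E * A * E with hDdef
  have hDH : Dᴴ = D := by
    simp only [hDdef, conjTranspose_mul, hEH, hAe, Matrix.mul_assoc]
  obtain ⟨G, hGHerm, hDGD, hGDG, hGcomm⟩ := Stmt10Aux2.exists_pinv (show D.IsHermitian from hDH)
  have hGH : Gᴴ = G := hGHerm.eq
  have hED : E * D = D := by
    simp only [hDdef, Matrix.mul_assoc, Stmt10Aux3.lift2 hEE]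
  have hDE : D * E = D := by
    simp only [hDdef, Matrix.mul_assoc, hEE]
  have hDP : D * P = 0 := by
    simp only [hDdef, Matrix.mul_assoc, hEP, Matrix.mul_zero]
  have hPD : P * D = 0 := by
    simp only [hDdef, Stmt10Aux3.lift2 hPE, Matrix.mul_assoc, Matrix.zero_mul]
  have hDB : D * B = 0 := by
    simp only [hDdef, Matrix.mul_assoc, hEB, Matrix.mul_zero]
  have hDGD' : D * (G * D) = D := by rw [← Matrix.mul_assoc]; exact hDGD
  have hGDG' : G * (D * G) = G := by rw [← Matrix.mul_assoc]; exact hGDG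
  have hGDD : G * D * D = D := by
    rw [← hGcomm, Matrix.mul_assoc D G D, hDGD']
  have hGDDp : G * (D * D) = D := by
    rw [← Matrix.mul_assoc G D D]; exact hGDD
  have hDDG : D * D * G = D := by
    rw [Matrix.mul_assoc D D G, hGcomm, hDGD']
  have hDDGp : D * (D * G) = D := by
    rw [← Matrix.mul_assoc D D G]; exact hDDG
  have hDGG : D * (G * G) = G := by
    have t1 : D * G * G = G := by rw [hGcomm]; exact hGDG
    rw [← Matrix.mul_assoc]; exact t1
  have hGGD : G * G * D = G := by
    have t1 : G * (G * D) = G := by rw [← hGcomm]; exact hGDG'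
    rw [Matrix.mul_assoc G G D]; exact t1
  have hEG : E * G = G := by
    conv_lhs => rw [← hDGG]
    rw [← Matrix.mul_assoc E D (G * G), hED, hDGG]
  have hGE : G * E = G := by
    conv_lhs => rw [← hGGD]
    rw [Matrix.mul_assoc (G * G) D E, hDE, hGGD]
  have hGP : G * P = 0 := by
    conv_lhs => rw [← hGE]
    rw [Matrix.mul_assoc, hEP, Matrix.mul_zero]
  have hPG : P * G = 0 := by
    conv_lhs => rw [← hEG]
    rw [← Matrix.mul_assoc, hPE, Matrix.zero_mul]
  -- the corner blocks
  set C : Matrix (Fin m) (Fin m) ℂ := P * A * E with hCdef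
  set Ct : Matrix (Fin m) (Fin m) ℂ := E * A * P with hCtdef
  have hCH : Cᴴ = Ct := by
    simp only [hCdef, hCtdef, conjTranspose_mul, hEH, hPH, hAe, Matrix.mul_assoc]
  have hCtH : Ctᴴ = C := by
    rw [← hCH, conjTranspose_conjTranspose]
  have hCC : C * C = 0 := by
    simp only [hCdef, Matrix.mul_assoc, Stmt10Aux3.lift2 hEP,
      Matrix.zero_mul, Matrix.mul_zero]
  have hCtCt : Ct * Ct = 0 := by
    simp only [hCtdef, Matrix.mul_assoc, Stmt10Aux3.lift2 hPE,
      Matrix.zero_mul, Matrix.mul_zero]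
  have hDC : D * C = 0 := by
    simp only [hDdef, hCdef, Matrix.mul_assoc, Stmt10Aux3.lift2 hEP,
      Matrix.zero_mul, Matrix.mul_zero]
  have hCtD : Ct * D = 0 := by
    simp only [hDdef, hCtdef, Matrix.mul_assoc, Stmt10Aux3.lift2 hPE,
      Matrix.zero_mul, Matrix.mul_zero]
  have hGC : G * C = 0 := by
    simp only [hCdef, Stmt10Aux3.lift2 hGP, Matrix.mul_assoc, Matrix.zero_mul]
  have hCtG : Ct * G = 0 := by
    simp only [hCtdef, Matrix.mul_assoc, hPG, Matrix.mul_zero]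
  have hPC : P * C = C := by
    simp only [hCdef, Stmt10Aux3.lift2 hPP, Matrix.mul_assoc]
  have hCP : C * P = 0 := by
    simp only [hCdef, Matrix.mul_assoc, hEP, Matrix.mul_zero]
  have hCtP : Ct * P = Ct := by
    simp only [hCtdef, Matrix.mul_assoc, hPP]
  have hPCt : P * Ct = 0 := by
    simp only [hCtdef, Stmt10Aux3.lift2 hPE, Matrix.mul_assoc, Matrix.zero_mul]
  have hCE : C * E = C := by
    simp only [hCdef, Matrix.mul_assoc, hEE]
  have hECt : E * Ct = Ct := by
    simp only [hCtdef, Stmt10Aux3.lift2 hEE, Matrix.mul_assoc]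
  -- K and Kt
  set K : Matrix (Fin m) (Fin m) ℂ := C - C * G * D with hKdef
  set Kt : Matrix (Fin m) (Fin m) ℂ := Ct - D * G * Ct with hKtdef
  have hKH : Kᴴ = Kt := by
    simp only [hKdef, hKtdef, conjTranspose_sub, conjTranspose_mul, hCH, hGH, hDH,
      Matrix.mul_assoc]
  have hKtH : Ktᴴ = K := by rw [← hKH, conjTranspose_conjTranspose]
  have hKK : K * K = 0 := by
    simp only [hKdef, Matrix.sub_mul, Matrix.mul_sub, Matrix.mul_assoc, hCC,
      Stmt10Aux3.lift2 hCC, Stmt10Aux3.lift2 hDC, hDC,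
      Matrix.zero_mul, Matrix.mul_zero, sub_zero, zero_sub, neg_zero, sub_self]
  have hKtKt : Kt * Kt = 0 := by
    simp only [hKtdef, Matrix.sub_mul, Matrix.mul_sub, Matrix.mul_assoc, hCtCt,
      Stmt10Aux3.lift2 hCtCt, Stmt10Aux3.lift2 hCtD, hCtD,
      Matrix.zero_mul, Matrix.mul_zero, sub_zero, zero_sub, neg_zero, sub_self]
  have hKD : K * D = 0 := by
    simp only [hKdef, Matrix.sub_mul, Matrix.mul_assoc, hGDDp, sub_self]
  have hDK : D * K = 0 := by
    simp only [hKdef, Matrix.mul_sub, Matrix.mul_assoc, hDC, Stmt10Aux3.lift2 hDC,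
      Matrix.zero_mul, Matrix.mul_zero, sub_zero, sub_self]
  have hKtD : Kt * D = 0 := by
    simp only [hKtdef, Matrix.sub_mul, Matrix.mul_assoc, hCtD, Stmt10Aux3.lift2 hCtD,
      Matrix.zero_mul, Matrix.mul_zero, sub_zero, sub_self]
  have hDKt : D * Kt = 0 := by
    simp only [hKtdef, Matrix.mul_sub, Matrix.mul_assoc, Stmt10Aux3.lift3 hDDG,
      sub_self]
  have hKP : K * P = 0 := by
    simp only [hKdef, Matrix.sub_mul, Matrix.mul_assoc, hCP, hDP,
      Matrix.mul_zero, sub_self]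
  have hPK : P * K = K := by
    simp only [hKdef, Matrix.mul_sub, Matrix.mul_assoc, hPC, Stmt10Aux3.lift2 hPC]
  have hKtP : Kt * P = Kt := by
    simp only [hKtdef, Matrix.sub_mul, Matrix.mul_assoc, hCtP, Stmt10Aux3.lift2 hCtP]
  have hPKt : P * Kt = 0 := by
    simp only [hKtdef, Matrix.mul_sub, Matrix.mul_assoc, hPCt, Stmt10Aux3.lift2 hPD,
      Matrix.zero_mul, Matrix.mul_zero, sub_self]

  -- units
  have hu1 : IsUnit (1 - C * G).det := by
    apply Matrix.isUnit_det_of_right_inverse (B := 1 + C * G)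
    simp only [Matrix.mul_add, Matrix.sub_mul, Matrix.mul_one, Matrix.one_mul,
      Matrix.mul_assoc, Stmt10Aux3.lift2 hGC, Matrix.zero_mul, Matrix.mul_zero,
      sub_zero]
    abel
  have hu2 : IsUnit (1 - G * Ct).det := by
    apply Matrix.isUnit_det_of_right_inverse (B := 1 + G * Ct)
    simp only [Matrix.mul_add, Matrix.sub_mul, Matrix.mul_one, Matrix.one_mul,
      Matrix.mul_assoc, Stmt10Aux3.lift2 hCtG, Matrix.zero_mul, Matrix.mul_zero,
      sub_zero]
    abel
  have hu3 : IsUnit (1 + Kt).det := by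
    apply Matrix.isUnit_det_of_right_inverse (B := 1 - Kt)
    simp only [Matrix.mul_sub, Matrix.add_mul, Matrix.mul_one, Matrix.one_mul,
      hKtKt, sub_zero]
    abel
  have hu4 : IsUnit (1 + K).det := by
    apply Matrix.isUnit_det_of_right_inverse (B := 1 - K)
    simp only [Matrix.mul_sub, Matrix.add_mul, Matrix.mul_one, Matrix.one_mul,
      hKK, sub_zero]
    abel
  have hrP : P.rank = B.rank := by
    apply le_antisymm
    · rw [hPdef]; exact Matrix.rank_mul_le_left _ _
    · conv_lhs => rw [← hPB]
      exact Matrix.rank_mul_le_left _ _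
  have hrKt : Kt.rank = K.rank := by
    rw [← hKH, Matrix.rank_conjTranspose]
  -- the central congruence computation
  have hcong : (1 - C * G) * (C + Ct + D + C * G * Ct) * (1 - G * Ct)
      = D + K + Kt := by
    rw [hKdef, hKtdef]
    simp only [Matrix.mul_add, Matrix.add_mul, Matrix.mul_sub, Matrix.sub_mul,
      Matrix.mul_one, Matrix.one_mul, Matrix.mul_assoc,
      hGC, Stmt10Aux3.lift2 hGC, hCtG, Stmt10Aux3.lift2 hCtG,
      Stmt10Aux3.lift3 hGDG, Matrix.zero_mul, Matrix.mul_zero, sub_zero]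
    abel
  have hcongP : (1 - C * G) * (C + Ct + D + C * G * Ct + P) * (1 - G * Ct)
      = D + K + Kt + P := by
    rw [hKdef, hKtdef]
    simp only [Matrix.mul_add, Matrix.add_mul, Matrix.mul_sub, Matrix.sub_mul,
      Matrix.mul_one, Matrix.one_mul, Matrix.mul_assoc,
      hGC, Stmt10Aux3.lift2 hGC, hCtG, Stmt10Aux3.lift2 hCtG, hGP,
      Stmt10Aux3.lift2 hGP, hPG, Stmt10Aux3.lift2 hPG,
      Stmt10Aux3.lift3 hGDG, Matrix.zero_mul, Matrix.mul_zero, sub_zero]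
    abel
  -- factorization for the max part
  have hfact : (1 + Kt) * (P + -(Kt * K)) * (1 + K) = D + K + Kt + P - D := by
    simp only [Matrix.mul_add, Matrix.add_mul, Matrix.mul_neg, Matrix.neg_mul,
      Matrix.mul_one, Matrix.one_mul, Matrix.mul_assoc,
      hPK, Stmt10Aux3.lift2 hPK, hKtP, hKK, Stmt10Aux3.lift2 hKK,
      hKtKt, Stmt10Aux3.lift2 hKtKt, Matrix.zero_mul, Matrix.mul_zero,
      add_zero, neg_zero]
    abel

  -- ============ rank of [A, B] ============
  set Rb : Matrix (Fin m ⊕ Fin n) (Fin m ⊕ Fin n) ℂ := fromBlocks 1 0 (-(Bp * A)) 1 with hRb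
  have hRbu : IsUnit Rb.det := by
    rw [hRb, Matrix.det_fromBlocks_zero₁₂, Matrix.det_one, Matrix.det_one, one_mul]
    exact isUnit_one
  have hTL : A + -(B * (Bp * A)) = E * A := by
    rw [← Matrix.mul_assoc, hBBp, hEdef]
    noncomm_ring
  have hB1 : fromCols A B * Rb = fromCols (E * A) B := by
    rw [hRb, fromCols_mul_fromBlocks]
    simp only [Matrix.mul_one, Matrix.mul_zero, Matrix.zero_mul, Matrix.one_mul,
      add_zero, zero_add, Matrix.mul_neg]
    rw [hTL]
  have hrc1 : (fromCols (E * A) B).rank = (fromCols A B).rank := by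
    rw [← hB1]
    exact Matrix.rank_mul_eq_left_of_isUnit_det Rb _ hRbu
  have hEAH : (E * A)ᴴ = A * E := by rw [conjTranspose_mul, hEH, hAe]
  have hrc2 : (fromCols (E * A) B).rank = ((E * A) * (A * E) + B * Bᴴ).rank := by
    conv_lhs => rw [← Matrix.rank_self_mul_conjTranspose]
    rw [conjTranspose_fromCols_eq_fromRows_conjTranspose, fromCols_mul_fromRows, hEAH]
  have ho1 : ((E * A) * (A * E))ᴴ * (B * Bᴴ) = 0 := by
    have h' : ((E * A) * (A * E))ᴴ = (E * A) * (A * E) := by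
      simp only [conjTranspose_mul, hEH, hAe, Matrix.mul_assoc]
    rw [h']
    simp only [Matrix.mul_assoc, Stmt10Aux3.lift2 hEB, Matrix.zero_mul, Matrix.mul_zero]
  have ho2 : ((E * A) * (A * E)) * (B * Bᴴ)ᴴ = 0 := by
    rw [conjTranspose_mul, conjTranspose_conjTranspose]
    simp only [Matrix.mul_assoc, Stmt10Aux3.lift2 hEB, Matrix.zero_mul, Matrix.mul_zero]
  have hrc3 : ((E * A) * (A * E) + B * Bᴴ).rank = (E * A).rank + B.rank := by
    rw [Stmt10Aux.rank_add_of_orth _ _ ho1 ho2]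
    congr 1
    · rw [show (E * A) * (A * E) = (E * A) * (E * A)ᴴ from by rw [hEAH],
        Matrix.rank_self_mul_conjTranspose]
    · exact Matrix.rank_self_mul_conjTranspose B
  have hPplusE : P + E = 1 := by rw [hEdef, add_sub_cancel]
  have hEAsplit : E * A = Ct + D := by
    rw [hCtdef, hDdef, ← Matrix.mul_add, hPplusE, Matrix.mul_one]
  have hEAG : E * A * G = D * G := by
    conv_lhs => rw [← hEG]
    rw [← Matrix.mul_assoc (E * A) E G, ← hDdef]
  have hEAfact : (E * A) * (1 - G * Ct) = Kt + D := by
    rw [Matrix.mul_sub, Matrix.mul_one, ← Matrix.mul_assoc (E * A) G Ct, hEAG,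
      hEAsplit, hKtdef, Matrix.mul_assoc]
    abel
  have hoKtD1 : Ktᴴ * D = 0 := by rw [hKtH]; exact hKD
  have hoKtD2 : Kt * Dᴴ = 0 := by rw [hDH]; exact hKtD
  have hrEA : (E * A).rank = K.rank + D.rank := by
    have h1 : ((E * A) * (1 - G * Ct)).rank = (E * A).rank :=
      Matrix.rank_mul_eq_left_of_isUnit_det _ _ hu2
    rw [← h1, hEAfact, Stmt10Aux.rank_add_of_orth _ _ hoKtD1 hoKtD2, hrKt]
  have rc_eq : (fromCols A B).rank = B.rank + (K.rank + D.rank) := by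
    rw [← hrc1, hrc2, hrc3, hrEA]
    omega

  -- ============ rank of the big block matrix ============
  set Gbig : Matrix (Fin m ⊕ Fin n) (Fin m ⊕ Fin n) ℂ :=
    fromBlocks A B Bᴴ (0 : Matrix (Fin n) (Fin n) ℂ) with hGbig
  set Lb : Matrix (Fin m ⊕ Fin n) (Fin m ⊕ Fin n) ℂ :=
    fromBlocks 1 (-(E * A * Bpᴴ)) 0 1 with hLb
  have hLbu : IsUnit Lb.det := by
    rw [hLb, Matrix.det_fromBlocks_zero₂₁, Matrix.det_one, Matrix.det_one, one_mul]
    exact isUnit_one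
  have hGb1 : Gbig * Rb = fromBlocks (E * A) B Bᴴ 0 := by
    rw [hGbig, hRb, fromBlocks_multiply]
    simp only [Matrix.mul_one, Matrix.mul_zero, Matrix.zero_mul, Matrix.one_mul,
      add_zero, zero_add, Matrix.mul_neg, neg_zero]
    rw [hTL]
  have hTL2 : E * A + -(E * A * Bpᴴ * Bᴴ) = D := by
    rw [Matrix.mul_assoc (E * A) Bpᴴ Bᴴ, hBpBH, hDdef, hEdef]
    noncomm_ring
  have hGb2 : Lb * fromBlocks (E * A) B Bᴴ 0 = fromBlocks D B Bᴴ 0 := by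
    rw [hLb, fromBlocks_multiply]
    simp only [Matrix.mul_one, Matrix.mul_zero, Matrix.zero_mul, Matrix.one_mul,
      add_zero, zero_add, Matrix.neg_mul]
    rw [hTL2]
  have hrG1 : Gbig.rank = (fromBlocks D B Bᴴ 0).rank := by
    calc Gbig.rank = (Gbig * Rb).rank :=
          (Matrix.rank_mul_eq_left_of_isUnit_det _ _ hRbu).symm
      _ = (Lb * (Gbig * Rb)).rank :=
          (Matrix.rank_mul_eq_right_of_isUnit_det _ _ hLbu).symm
      _ = _ := by rw [hGb1, hGb2]
  have hsplit : fromBlocks D B Bᴴ (0 : Matrix (Fin n) (Fin n) ℂ)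
      = fromBlocks D 0 0 0 + fromBlocks 0 B Bᴴ 0 := by
    simp only [fromBlocks_add, add_zero, zero_add]
  have hS2H : (fromBlocks 0 B Bᴴ (0 : Matrix (Fin n) (Fin n) ℂ))ᴴ
      = fromBlocks 0 B Bᴴ 0 := by
    rw [fromBlocks_conjTranspose]
    simp only [conjTranspose_zero, conjTranspose_conjTranspose]
  have hoS1 : (fromBlocks D 0 0 (0 : Matrix (Fin n) (Fin n) ℂ))ᴴ
      * fromBlocks 0 B Bᴴ 0 = 0 := by
    rw [fromBlocks_conjTranspose, fromBlocks_multiply]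
    simp only [conjTranspose_zero, hDH, Matrix.mul_zero, Matrix.zero_mul,
      add_zero, zero_add, hDB, fromBlocks_zero]
  have hoS2 : fromBlocks D 0 0 (0 : Matrix (Fin n) (Fin n) ℂ)
      * (fromBlocks 0 B Bᴴ 0)ᴴ = 0 := by
    rw [hS2H, fromBlocks_multiply]
    simp only [Matrix.mul_zero, Matrix.zero_mul, add_zero, zero_add, hDB, fromBlocks_zero]
  have hsplit2 : fromBlocks (0 : Matrix (Fin m) (Fin m) ℂ) B Bᴴ
      (0 : Matrix (Fin n) (Fin n) ℂ) = fromBlocks 0 B 0 0 + fromBlocks 0 0 Bᴴ 0 := by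
    simp only [fromBlocks_add, add_zero, zero_add]
  have hoT1 : (fromBlocks (0 : Matrix (Fin m) (Fin m) ℂ) B 0
      (0 : Matrix (Fin n) (Fin n) ℂ))ᴴ * fromBlocks 0 0 Bᴴ 0 = 0 := by
    rw [fromBlocks_conjTranspose, fromBlocks_multiply]
    simp only [conjTranspose_zero, Matrix.mul_zero, Matrix.zero_mul,
      add_zero, zero_add, fromBlocks_zero]
  have hoT2 : fromBlocks (0 : Matrix (Fin m) (Fin m) ℂ) B 0
      (0 : Matrix (Fin n) (Fin n) ℂ) * (fromBlocks 0 0 Bᴴ 0)ᴴ = 0 := by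
    rw [fromBlocks_conjTranspose, fromBlocks_multiply]
    simp only [conjTranspose_zero, conjTranspose_conjTranspose, Matrix.mul_zero,
      Matrix.zero_mul, add_zero, zero_add, fromBlocks_zero]
  have hrS2 : (fromBlocks (0 : Matrix (Fin m) (Fin m) ℂ) B Bᴴ
      (0 : Matrix (Fin n) (Fin n) ℂ)).rank = B.rank + B.rank := by
    rw [hsplit2, Stmt10Aux.rank_add_of_orth _ _ hoT1 hoT2,
      Stmt10Aux2.rank_fromBlocks_topright, Stmt10Aux2.rank_fromBlocks_botleft,
      Matrix.rank_conjTranspose]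
  have rG_eq : Gbig.rank = D.rank + (B.rank + B.rank) := by
    rw [hrG1, hsplit, Stmt10Aux.rank_add_of_orth _ _ hoS1 hoS2,
      Stmt10Aux2.rank_fromBlocks_topleft, hrS2]

  -- ============ the optimal Hermitian matrices ============
  set Wm : Matrix (Fin m) (Fin m) ℂ := A - A * E * G * (E * A) with hWm
  have hWmH : Wmᴴ = Wm := by
    simp only [hWm, conjTranspose_sub, conjTranspose_mul, hAe, hEH, hGH, Matrix.mul_assoc]
  set Xmin : Matrix (Fin n) (Fin n) ℂ := Bp * Wm * Bpᴴ with hXmin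
  set Xmax : Matrix (Fin n) (Fin n) ℂ := Bp * (Wm - 1) * Bpᴴ with hXmax
  have hXminH : Xmin.IsHermitian := by
    show Xminᴴ = Xmin
    simp only [hXmin, conjTranspose_mul, conjTranspose_conjTranspose, hWmH,
      Matrix.mul_assoc]
  have hXmaxH : Xmax.IsHermitian := by
    show Xmaxᴴ = Xmax
    simp only [hXmax, conjTranspose_sub, conjTranspose_mul, conjTranspose_conjTranspose,
      conjTranspose_one, hWmH, Matrix.mul_assoc]
  have hstep1 : ∀ (W : Matrix (Fin m) (Fin m) ℂ), B * (Bp * W * Bpᴴ) * Bᴴ = P * (W * P) := by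
    intro W
    simp only [Matrix.mul_assoc, hBpBH, Stmt10Aux3.lift2 hBBp]
  have hMmin : A - B * Xmin * Bᴴ = C + Ct + D + C * G * Ct := by
    rw [hXmin, hstep1 Wm, hWm, hCdef, hCtdef, hDdef, hEdef]
    noncomm_ring
  have hBXmin : B * Xmin * Bᴴ = P * (Wm * P) := by
    rw [hXmin]; exact hstep1 Wm
  have hMmax : A - B * Xmax * Bᴴ = C + Ct + D + C * G * Ct + P := by
    rw [hXmax, hstep1 (Wm - 1),
      show (Wm - 1) * P = Wm * P - P from by rw [Matrix.sub_mul, Matrix.one_mul],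
      show P * (Wm * P - P) = P * (Wm * P) - P from by rw [Matrix.mul_sub, hPP],
      ← hBXmin,
      show A - (B * Xmin * Bᴴ - P) = (A - B * Xmin * Bᴴ) + P from by abel,
      hMmin]
  have hvmin : (A - B * Xmin * Bᴴ).rank = D.rank + (K.rank + K.rank) := by
    rw [hMmin]
    have e1 : ((1 - C * G) * (C + Ct + D + C * G * Ct) * (1 - G * Ct)).rank
        = (C + Ct + D + C * G * Ct).rank := by
      rw [Matrix.rank_mul_eq_left_of_isUnit_det _ _ hu2,
        Matrix.rank_mul_eq_right_of_isUnit_det _ _ hu1]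
    rw [← e1, hcong]
    have hadd : D + K + Kt = D + (K + Kt) := by rw [add_assoc]
    have c1 : Dᴴ * (K + Kt) = 0 := by
      rw [hDH, Matrix.mul_add, hDK, hDKt, add_zero]
    have c2 : D * (K + Kt)ᴴ = 0 := by
      rw [conjTranspose_add, hKH, hKtH, Matrix.mul_add, hDKt, hDK, add_zero]
    rw [hadd, Stmt10Aux.rank_add_of_orth _ _ c1 c2]
    have c3 : Kᴴ * Kt = 0 := by rw [hKH]; exact hKtKt
    have c4 : K * Ktᴴ = 0 := by rw [hKtH]; exact hKK
    rw [Stmt10Aux.rank_add_of_orth _ _ c3 c4, hrKt]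
  have hvmax : (A - B * Xmax * Bᴴ).rank = D.rank + (B.rank + K.rank) := by
    rw [hMmax]
    have e1 : ((1 - C * G) * (C + Ct + D + C * G * Ct + P) * (1 - G * Ct)).rank
        = (C + Ct + D + C * G * Ct + P).rank := by
      rw [Matrix.rank_mul_eq_left_of_isUnit_det _ _ hu2,
        Matrix.rank_mul_eq_right_of_isUnit_det _ _ hu1]
    rw [← e1, hcongP]
    have hadd : D + K + Kt + P = D + (K + Kt + P) := by abel
    have c1 : Dᴴ * (K + Kt + P) = 0 := by
      rw [hDH, Matrix.mul_add, Matrix.mul_add, hDK, hDKt, hDP, add_zero, add_zero]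
    have c2 : D * (K + Kt + P)ᴴ = 0 := by
      rw [conjTranspose_add, conjTranspose_add, hKH, hKtH, hPH,
        Matrix.mul_add, Matrix.mul_add, hDKt, hDK, hDP, add_zero, add_zero]
    rw [hadd, Stmt10Aux.rank_add_of_orth _ _ c1 c2]
    have hfact' : (1 + Kt) * (P + -(Kt * K)) * (1 + K) = K + Kt + P := by
      rw [hfact]; abel
    have e2 : (K + Kt + P).rank = (P + -(Kt * K)).rank := by
      rw [← hfact', Matrix.rank_mul_eq_left_of_isUnit_det _ _ hu4,
        Matrix.rank_mul_eq_right_of_isUnit_det _ _ hu3]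
    have c7 : Pᴴ * -(Kt * K) = 0 := by
      rw [hPH, Matrix.mul_neg, ← Matrix.mul_assoc, hPKt, Matrix.zero_mul, neg_zero]
    have c8 : P * (-(Kt * K))ᴴ = 0 := by
      rw [conjTranspose_neg, conjTranspose_mul, hKH, hKtH, Matrix.mul_neg,
        ← Matrix.mul_assoc, hPKt, Matrix.zero_mul, neg_zero]
    rw [e2, Stmt10Aux.rank_add_of_orth _ _ c7 c8, hrP, Stmt10Aux3.rank_neg,
      show Kt * K = Kᴴ * K from by rw [hKH], Matrix.rank_conjTranspose_mul_self]

  -- ============ upper bound ============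
  have hub : ∀ (X : Matrix (Fin n) (Fin n) ℂ),
      (A - B * X * Bᴴ).rank ≤ (fromCols A B).rank := by
    intro X
    have hfac : A - B * X * Bᴴ = fromCols A B * fromRows (1 : Matrix (Fin m) (Fin m) ℂ) (-(X * Bᴴ)) := by
      rw [fromCols_mul_fromRows, Matrix.mul_one, Matrix.mul_neg,
        ← Matrix.mul_assoc, ← sub_eq_add_neg]
    rw [hfac]
    exact Matrix.rank_mul_le_left _ _
  -- ============ lower bound ============
  have hlb : ∀ (X : Matrix (Fin n) (Fin n) ℂ), X.IsHermitian →
      2 * (fromCols A B).rank ≤ Gbig.rank + (A - B * X * Bᴴ).rank := by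
    intro X hX
    set Dx : Matrix (Fin m) (Fin m) ℂ := A - B * X * Bᴴ with hDx
    have hDxH : Dxᴴ = Dx := by
      rw [hDx, conjTranspose_sub, hAe, conjTranspose_mul, conjTranspose_mul,
        conjTranspose_conjTranspose, hX.eq, Matrix.mul_assoc]
    set c : ℂ := (1/2 : ℂ) with hc
    have hcstar : star c = c := by
      rw [hc]
      simp [star_div₀]
    set U : Matrix (Fin m ⊕ Fin n) (Fin m ⊕ Fin n) ℂ :=
      fromBlocks 1 (-(c • (B * X))) 0 1 with hU
    have hUu : IsUnit U.det := by
      rw [hU, Matrix.det_fromBlocks_zero₂₁, Matrix.det_one, Matrix.det_one, one_mul]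
      exact isUnit_one
    have hUH : Uᴴ = fromBlocks 1 0 (-(c • (X * Bᴴ))) 1 := by
      rw [hU, fromBlocks_conjTranspose]
      simp only [conjTranspose_one, conjTranspose_zero, conjTranspose_neg,
        conjTranspose_smul, conjTranspose_mul, hX.eq, hcstar]
    have hUHu : IsUnit (Uᴴ).det := by
      rw [Matrix.det_conjTranspose]
      exact hUu.star
    have hUG : U * Gbig * Uᴴ = fromBlocks Dx B Bᴴ 0 := by
      rw [hGbig, hU, hUH, fromBlocks_multiply, fromBlocks_multiply]
      simp only [Matrix.one_mul, Matrix.mul_one, Matrix.zero_mul, Matrix.mul_zero,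
        add_zero, zero_add, Matrix.neg_mul, Matrix.mul_neg, Matrix.smul_mul,
        Matrix.mul_smul, neg_zero, smul_zero]
      rw [show A + -(c • (B * X * Bᴴ)) + -(c • (B * (X * Bᴴ))) = Dx from by
        rw [show B * (X * Bᴴ) = B * X * Bᴴ from (Matrix.mul_assoc B X Bᴴ).symm, hDx, hc]
        module]
    -- rank of the transformed block matrix
    have hgb : (fromBlocks Dx B Bᴴ (0 : Matrix (Fin n) (Fin n) ℂ)).rank = Gbig.rank := by
      rw [← hUG, Matrix.rank_mul_eq_left_of_isUnit_det _ _ hUHu,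
        Matrix.rank_mul_eq_right_of_isUnit_det _ _ hUu]
    -- Frobenius inequality
    have hfrob := Stmt10Aux2.frobenius_rank
      (fromCols (1 : Matrix (Fin m) (Fin m) ℂ) (0 : Matrix (Fin m) (Fin n) ℂ))
      (fromBlocks Dx B Bᴴ (0 : Matrix (Fin n) (Fin n) ℂ))
      (fromRows (1 : Matrix (Fin m) (Fin m) ℂ) (0 : Matrix (Fin n) (Fin m) ℂ))
    have hXY : fromCols (1 : Matrix (Fin m) (Fin m) ℂ) (0 : Matrix (Fin m) (Fin n) ℂ)
        * fromBlocks Dx B Bᴴ (0 : Matrix (Fin n) (Fin n) ℂ) = fromCols Dx B := by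
      rw [fromCols_mul_fromBlocks]
      simp only [Matrix.one_mul, Matrix.zero_mul, Matrix.mul_zero, add_zero]
    have hYZ : fromBlocks Dx B Bᴴ (0 : Matrix (Fin n) (Fin n) ℂ)
        * fromRows (1 : Matrix (Fin m) (Fin m) ℂ) (0 : Matrix (Fin n) (Fin m) ℂ)
        = fromRows Dx Bᴴ := by
      rw [fromBlocks_mul_fromRows]
      simp only [Matrix.mul_one, Matrix.mul_zero, Matrix.zero_mul, add_zero]
    have hXYZ : fromCols Dx B
        * fromRows (1 : Matrix (Fin m) (Fin m) ℂ) (0 : Matrix (Fin n) (Fin m) ℂ) = Dx := by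
      rw [fromCols_mul_fromRows, Matrix.mul_one, Matrix.mul_zero, add_zero]
    rw [hXY, hYZ, hXYZ] at hfrob
    have hrRows : (fromRows Dx Bᴴ).rank = (fromCols Dx B).rank := by
      rw [← Matrix.rank_conjTranspose (fromRows Dx Bᴴ),
        conjTranspose_fromRows_eq_fromCols_conjTranspose, hDxH,
        conjTranspose_conjTranspose]
    have hcolDx : (fromCols Dx B).rank = (fromCols A B).rank := by
      have hdetu : IsUnit (fromBlocks (1 : Matrix (Fin m) (Fin m) ℂ) 0 (-(X * Bᴴ))
          (1 : Matrix (Fin n) (Fin n) ℂ)).det := by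
        rw [Matrix.det_fromBlocks_zero₁₂, Matrix.det_one, Matrix.det_one, one_mul]
        exact isUnit_one
      have hfc : fromCols A B * fromBlocks (1 : Matrix (Fin m) (Fin m) ℂ) 0 (-(X * Bᴴ))
          (1 : Matrix (Fin n) (Fin n) ℂ) = fromCols Dx B := by
        rw [fromCols_mul_fromBlocks]
        simp only [Matrix.mul_one, Matrix.mul_zero, Matrix.mul_neg, zero_add, add_zero]
        rw [show A + -(B * (X * Bᴴ)) = Dx from by
          rw [show B * (X * Bᴴ) = B * X * Bᴴ from (Matrix.mul_assoc B X Bᴴ).symm, hDx,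
            ← sub_eq_add_neg]]
      rw [← hfc]
      exact Matrix.rank_mul_eq_left_of_isUnit_det _ _ hdetu
    rw [hrRows, hcolDx, hgb] at hfrob
    omega
  -- ============ conclusion ============
  constructor
  · constructor
    · refine ⟨Xmax, hXmaxH, ?_⟩
      omega
    · rintro k ⟨X, hX, rfl⟩
      exact hub X
  · constructor
    · refine ⟨Xmin, hXminH, ?_⟩
      omega
    · rintro k ⟨X, hX, rfl⟩
      have h := hlb X hX
      omega
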